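/- Let p be a prime, t a nonzero integer, and m a positive integer with m ≤ p^{ν_p(t)}. Then the p-adic valuation of the coefficient of x^{(p−1)m} in ℓ(x)^t equals ν_p(t) − ν_p(m) − m, where ℓ(x) = log(1+x)/x = ∑_{i≥0} (−1)^i x^i/(i+1) and t may be any (positive or negative) integer. -/

import Mathlib

open PowerSeries

noncomputable def ell : PowerSeries ℚ := PowerSeries.mk fun i => (-1)^i / (i+1)

noncomputable def ellzpow (t : ℤ) : PowerSeries ℚ :=
  if 0 ≤ t then ell ^ t.toNat else ell⁻¹ ^ (-t).toNat

open Finset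
section
variable {p : ℕ} [hp : Fact p.Prime]

lemma descPochhammer_smeval_rat (x : ℚ) (k : ℕ) :
    (descPochhammer ℤ k).smeval x = ∏ i ∈ range k, (x - i) := by
  induction k with
  | zero => simp [descPochhammer_zero, Polynomial.smeval_one]
  | succ n ih =>
      rw [descPochhammer_succ_right, Polynomial.smeval_mul, ih, prod_range_succ,
        Polynomial.smeval_sub, Polynomial.smeval_X, Polynomial.smeval_natCast]
      simp

lemma ringChoose_eq (x : ℚ) (k : ℕ) :
    Ring.choose x k = (∏ i ∈ range k, (x - i)) / k.factorial := by
  have h := Ring.descPochhammer_eq_factorial_smul_choose x k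
  rw [descPochhammer_smeval_rat] at h
  rw [h, nsmul_eq_mul]
  field_simp

lemma ringChoose_reflect (x : ℚ) (k : ℕ) :
    Ring.choose x k = (-1)^k * Ring.choose ((k:ℚ) - 1 - x) k := by
  rw [ringChoose_eq, ringChoose_eq]
  have h1 : ∏ i ∈ range k, (((k:ℚ) - 1 - x) - i) = ∏ i ∈ range k, ((i:ℚ) - x) := by
    have := Finset.prod_range_reflect (fun j => ((j:ℚ) - x)) k
    rw [← this]
    apply prod_congr rfl
    intro j hj
    have hjk : j ≤ k - 1 := by
      have := mem_range.1 hj; omega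
    have hk1 : (((k - 1 - j : ℕ)):ℚ) = (k:ℚ) - 1 - j := by
      have hj' := mem_range.1 hj
      push_cast [Nat.cast_sub (by omega : j ≤ k - 1), Nat.cast_sub (by omega : 1 ≤ k)]
      ring
    rw [hk1]; ring
  have h2 : ∏ i ∈ range k, ((i:ℚ) - x) = (-1)^k * ∏ i ∈ range k, (x - i) := by
    have : ∀ i ∈ range k, ((i:ℚ) - x) = -1 * (x - i) := by intros; ring
    rw [prod_congr rfl this, prod_mul_distrib, prod_const, card_range]
  have h3 : ((-1:ℚ))^k * (-1:ℚ)^k = 1 := by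
    rw [← pow_add]; exact Even.neg_one_pow ⟨k, rfl⟩
  rw [h1, h2]
  rw [mul_div_assoc, ← mul_assoc, h3, one_mul]

lemma ringChoose_int_norm (z : ℤ) (k : ℕ) : padicNorm p (Ring.choose (z:ℚ) k) ≤ 1 := by
  rcases z with n | n
  · rw [Int.ofNat_eq_natCast, Int.cast_natCast, Ring.choose_natCast]
    exact padicNorm.of_nat _
  · have : ((Int.negSucc n : ℤ) : ℚ) = -((n:ℚ)+1) := by push_cast; ring
    rw [this, ringChoose_reflect]
    have : ((k:ℚ) - 1 - -((n:ℚ)+1)) = ((k + n : ℕ) : ℚ) := by push_cast; ring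
    rw [this, Ring.choose_natCast, padicNorm.mul]
    have hne : padicNorm p ((-1:ℚ)^k) = 1 := by
      rcases Nat.even_or_odd k with h | h
      · rw [h.neg_one_pow, padicNorm.one]
      · rw [h.neg_one_pow, padicNorm.neg, padicNorm.one]
    rw [hne, one_mul]
    exact padicNorm.of_nat _

lemma ringChoose_succ (x : ℚ) (k : ℕ) :
    Ring.choose x (k+1) = (x / (k+1)) * Ring.choose (x-1) k := by
  rw [ringChoose_eq, ringChoose_eq, prod_range_succ']
  have : ∀ i ∈ range k, x - (↑(i+1) : ℚ) = (x - 1) - i := by intros; push_cast; ring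
  rw [prod_congr rfl this, Nat.factorial_succ]
  push_cast
  field_simp
  ring


lemma ringChoose_zero_of_pos (n : ℕ) (hn : 0 < n) : Ring.choose (0 : ℚ) n = 0 := by
  rw [ringChoose_eq]
  rw [Finset.prod_eq_zero (Finset.mem_range.2 hn) (by simp)]
  simp

lemma padicNorm_intCast (z : ℤ) (hz : z ≠ 0) :
    padicNorm p (z:ℚ) = (p:ℚ)^(-(padicValInt p z : ℤ)) := by
  rw [padicNorm.eq_zpow_of_nonzero (by exact_mod_cast hz), padicValRat.of_int]

lemma padicNorm_natCast (n : ℕ) (hn : n ≠ 0) :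
    padicNorm p (n:ℚ) = (p:ℚ)^(-(padicValNat p n : ℤ)) := by
  have : ((n:ℤ):ℚ) = (n:ℚ) := by push_cast; rfl
  rw [← this, padicNorm_intCast _ (by exact_mod_cast hn), padicValInt.of_nat]

-- bound: ν_p(choose t k) ≥ ν_p t - ν_p k
lemma chi_norm_le (t : ℤ) (ht : t ≠ 0) (k : ℕ) (hk : 0 < k) :
    padicNorm p (Ring.choose (t:ℚ) k) ≤ (p:ℚ)^((padicValNat p k : ℤ) - padicValInt p t) := by
  obtain ⟨k', rfl⟩ : ∃ k', k = k' + 1 := ⟨k-1, by omega⟩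
  rw [ringChoose_succ]
  have hcast : (t:ℚ) - 1 = ((t - 1 : ℤ) : ℚ) := by push_cast; ring
  rw [padicNorm.mul, padicNorm.div, hcast]
  have h1 : padicNorm p ((t:ℚ)) = (p:ℚ)^(-(padicValInt p t : ℤ)) := padicNorm_intCast t ht
  have h2 : padicNorm p ((k'+1 : ℚ)) = (p:ℚ)^(-(padicValNat p (k'+1) : ℤ)) := by
    have : ((k'+1 : ℕ):ℚ) = (k':ℚ) + 1 := by push_cast; ring
    rw [← this]; exact padicNorm_natCast _ (by omega)
  have h3 := ringChoose_int_norm (p := p) (t-1) k'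
  have hp0 : (0:ℚ) < (p:ℚ) ^ ((padicValNat p (k'+1) : ℤ) - padicValInt p t) := by
    apply zpow_pos; exact_mod_cast hp.out.pos
  calc padicNorm p (t:ℚ) / padicNorm p ((k':ℚ)+1) * padicNorm p (Ring.choose ((t-1:ℤ):ℚ) k')
      ≤ padicNorm p (t:ℚ) / padicNorm p ((k':ℚ)+1) * 1 := by
        apply mul_le_mul_of_nonneg_left h3
        exact div_nonneg (padicNorm.nonneg _) (padicNorm.nonneg _)
    _ = (p:ℚ)^(-(padicValInt p t : ℤ)) / (p:ℚ)^(-(padicValNat p (k'+1) : ℤ)) := by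
        rw [mul_one, h1, ← h2]
    _ = (p:ℚ)^((padicValNat p (k'+1) : ℤ) - padicValInt p t) := by
        rw [← zpow_sub₀ (by exact_mod_cast hp.out.ne_zero : (p:ℚ) ≠ 0)]
        ring_nf
end

section
variable {p : ℕ} [hp : Fact p.Prime]

lemma padicValRat_prod {ι : Type*} (s : Finset ι) (f : ι → ℚ) (h : ∀ i ∈ s, f i ≠ 0) :
    padicValRat p (∏ i ∈ s, f i) = ∑ i ∈ s, padicValRat p (f i) := by
  classical
  induction s using Finset.induction with
  | empty => simp
  | @insert x s' hx ih =>
      rw [prod_insert hx, sum_insert hx,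
        padicValRat.mul (h x (mem_insert_self x s'))
          (prod_ne_zero_iff.2 (fun i hi => h i (mem_insert_of_mem hi))),
        ih (fun i hi => h i (mem_insert_of_mem hi))]

lemma val_factorial_sum (n : ℕ) :
    padicValNat p (n.factorial) = ∑ i ∈ range n, padicValNat p (i+1) := by
  induction n with
  | zero => simp
  | succ n ih =>
      rw [Nat.factorial_succ, padicValNat.mul (by omega) (Nat.factorial_ne_zero n), ih,
        sum_range_succ]
      ring

-- key: ν_p(t - i) = ν_p(i) for 1 ≤ i < p^(ν_p t)
lemma val_t_sub (t : ℤ) (ht : t ≠ 0) (i : ℕ) (hi1 : 1 ≤ i) (hi2 : i < p ^ (padicValInt p t)) :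
    t ≠ (i:ℤ) ∧ padicValInt p (t - i) = padicValNat p i := by
  set a := padicValInt p t with ha
  set b := padicValNat p i with hb
  have hpa : (p:ℤ)^a ∣ t := padicValInt_dvd t
  have hpbi : (p:ℤ)^b ∣ (i:ℤ) := by exact_mod_cast pow_padicValNat_dvd
  have hpbi' : ¬ (p:ℤ)^(b+1) ∣ (i:ℤ) := by
    have := pow_succ_padicValNat_not_dvd (p := p) (n := i) (by omega)
    exact_mod_cast this
  have hba : b + 1 ≤ a := by
    have h1 : p^b ≤ i := Nat.le_of_dvd (by omega) pow_padicValNat_dvd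
    have : p^b < p^a := lt_of_le_of_lt h1 hi2
    have := (Nat.pow_lt_pow_iff_right hp.out.one_lt).1 this
    omega
  have hti : t ≠ (i:ℤ) := by
    rintro rfl
    exact hpbi' (dvd_trans (pow_dvd_pow _ hba) hpa)
  refine ⟨hti, ?_⟩
  have hsub : t - i ≠ 0 := sub_ne_zero.2 hti
  have hd1 : (p:ℤ)^b ∣ t - i :=
    dvd_sub (dvd_trans (pow_dvd_pow _ (by omega)) hpa) hpbi
  have hd2 : ¬ (p:ℤ)^(b+1) ∣ t - i := by
    intro hdvd
    exact hpbi' (by simpa using dvd_sub (dvd_trans (pow_dvd_pow _ hba) hpa) hdvd)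
  have hle : b ≤ padicValInt p (t - i) := by
    rcases (padicValInt_dvd_iff b (t-i)).1 hd1 with h | h
    · exact absurd h hsub
    · exact h
  have hlt : ¬ (b + 1 ≤ padicValInt p (t - i)) := by
    intro hc
    exact hd2 ((padicValInt_dvd_iff (b+1) (t-i)).2 (Or.inr hc))
  omega

end

section
variable {p : ℕ} [hp : Fact p.Prime]


lemma chi_val_eq (t : ℤ) (ht : t ≠ 0) (m : ℕ) (hm : 0 < m) (hmp : m ≤ p ^ padicValInt p t) :
    Ring.choose (t:ℚ) m ≠ 0 ∧
      padicValRat p (Ring.choose (t:ℚ) m) = (padicValInt p t : ℤ) - padicValNat p m := by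
  have hmp' : m ≤ p ^ padicValInt p t := hmp
  obtain ⟨m', rfl⟩ : ∃ m', m = m' + 1 := ⟨m-1, by omega⟩
  have hcast : ∀ i : ℕ, (t:ℚ) - i = ((t - i : ℤ) : ℚ) := by intro i; push_cast; ring
  have hne : ∀ i ∈ range (m'+1), (t:ℚ) - (i:ℕ) ≠ 0 := by
    intro i hi
    rw [hcast]
    rcases Nat.eq_zero_or_pos i with h0 | h0
    · subst h0; simpa using ht
    · have := (val_t_sub (p := p) t ht i h0 (by have := mem_range.1 hi; omega)).1
      intro hc
      exact this (by exact_mod_cast sub_eq_zero.1 (by exact_mod_cast hc))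
  have hprodne : (∏ i ∈ range (m'+1), ((t:ℚ) - i)) ≠ 0 := prod_ne_zero_iff.2 hne
  have hfact : ((m'+1).factorial : ℚ) ≠ 0 := by exact_mod_cast (m'+1).factorial_ne_zero
  have hvalprod : padicValRat p (∏ i ∈ range (m'+1), ((t:ℚ) - i))
      = (padicValInt p t : ℤ) + padicValNat p (m'.factorial) := by
    rw [padicValRat_prod _ _ hne, sum_range_succ']
    have h0 : padicValRat p ((t:ℚ) - (0:ℕ)) = (padicValInt p t : ℤ) := by
      simp only [Nat.cast_zero, sub_zero]
      rw [padicValRat.of_int]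
    have hstep : ∀ i ∈ range m', padicValRat p ((t:ℚ) - ((i+1 : ℕ):ℚ))
        = (padicValNat p (i+1) : ℤ) := by
      intro i hi
      have := (val_t_sub (p := p) t ht (i+1) (by omega)
        (by have := mem_range.1 hi; omega)).2
      rw [hcast, padicValRat.of_int]
      exact_mod_cast congrArg (fun x : ℕ => (x:ℤ)) this
    rw [sum_congr rfl hstep, h0, val_factorial_sum]
    push_cast
    ring
  constructor
  · rw [ringChoose_eq]
    exact div_ne_zero hprodne hfact
  · rw [ringChoose_eq, padicValRat.div hprodne hfact, hvalprod]
    have : padicValRat p (((m'+1).factorial : ℚ))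
        = (padicValNat p (m'+1) : ℤ) + padicValNat p (m'.factorial) := by
      have hcast2 : (((m'+1).factorial : ℕ) : ℚ) = ((m'+1).factorial : ℚ) := by push_cast; rfl
      rw [← hcast2, padicValRat.of_nat, Nat.factorial_succ,
        padicValNat.mul (by omega) (Nat.factorial_ne_zero m')]
      push_cast; ring
    rw [this]
    push_cast
    ring
end

section
variable {p : ℕ} [hp : Fact p.Prime]

lemma aux_pow_ineq_gen (P v : ℕ) (hP : 1 ≤ P) : P*v + 1 ≤ (P+1)^v := by
  induction v with
  | zero => simp
  | succ v ih =>
      have h1 : 1 ≤ (P+1)^v := Nat.one_le_pow _ _ (by omega)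
      rw [pow_succ]
      nlinarith

lemma aux_pow_ineq2_gen (P v : ℕ) (hP : 1 ≤ P) (hv : 2 ≤ v) : P*v + 2 ≤ (P+1)^v := by
  induction v with
  | zero => omega
  | succ v ih =>
      rcases Nat.lt_or_ge v 2 with h | h
      · interval_cases v
        · omega
        · have : (P+1)^2 = (P+1)*(P+1) := by ring
          rw [this]; nlinarith
      · have h1 : 1 ≤ (P+1)^v := Nat.one_le_pow _ _ (by omega)
        have := ih h
        rw [pow_succ]
        nlinarith

lemma aux_pow_ineq (v : ℕ) : (p-1)*v + 1 ≤ p^v := by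
  have hp2 : 2 ≤ p := hp.out.two_le
  have h := aux_pow_ineq_gen (p-1) v (by omega)
  have : p - 1 + 1 = p := by omega
  rwa [this] at h

lemma aux_pow_ineq2 (v : ℕ) (hv : 2 ≤ v) : (p-1)*v + 2 ≤ p^v := by
  have hp2 : 2 ≤ p := hp.out.two_le
  have h := aux_pow_ineq2_gen (p-1) v (by omega) hv
  have : p - 1 + 1 = p := by omega
  rwa [this] at h

-- N1
lemma val_ineq_B (B : ℕ) (hB : 1 ≤ B) : (p-1) * padicValNat p B + 1 ≤ B := by
  have h1 : p ^ padicValNat p B ≤ B := Nat.le_of_dvd (by omega) pow_padicValNat_dvd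
  exact le_trans (aux_pow_ineq _) h1

-- N2
lemma val_ineq_q (q : ℕ) (hq : 2 ≤ q) (hqp : q ≠ p) : (p-1) * padicValNat p q + 2 ≤ q := by
  rcases Nat.eq_zero_or_pos (padicValNat p q) with h0 | h0
  · rw [h0, mul_zero]; omega
  · set e := padicValNat p q with he
    obtain ⟨c, hc⟩ := pow_padicValNat_dvd (p := p) (n := q)
    rw [← he] at hc
    have hpe1 : 1 ≤ p^e := Nat.one_le_pow _ _ hp.out.pos
    rcases Nat.lt_or_ge c 2 with hc2 | hc2
    · interval_cases c
      · omega
      · have hqe : q = p^e := by omega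
        have he2 : 2 ≤ e := by
          rcases Nat.lt_or_ge e 2 with h | h
          · exfalso
            have he1 : e = 1 := by omega
            apply hqp
            rw [hqe, he1, pow_one]
          · exact h
        rw [hqe]
        exact aux_pow_ineq2 e he2
    · have h2q : 2 * p^e ≤ q := by
        calc 2 * p^e = p^e * 2 := by ring
        _ ≤ p^e * c := Nat.mul_le_mul_left _ hc2
        _ = q := hc.symm
      have := aux_pow_ineq (p := p) e
      omega

-- dominated sum lemmas
lemma padicNorm_sum_le'' {ι : Type*} {s : Finset ι} {f : ι → ℚ} {C : ℚ} (hC : 0 ≤ C)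
    (h : ∀ i ∈ s, padicNorm p (f i) ≤ C) : padicNorm p (∑ i ∈ s, f i) ≤ C := by
  rcases s.eq_empty_or_nonempty with rfl | hne
  · simpa [padicNorm.zero] using hC
  · exact padicNorm.sum_le hne h

lemma padicNorm_sum_eq {ι : Type*} [DecidableEq ι] {s : Finset ι} {f : ι → ℚ} {A : ℚ} {i₀ : ι}
    (h₀ : i₀ ∈ s) (hA : 0 < A) (hmain : padicNorm p (f i₀) = A)
    (hrest : ∀ i ∈ s, i ≠ i₀ → padicNorm p (f i) < A) :
    padicNorm p (∑ i ∈ s, f i) = A := by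
  rw [← Finset.add_sum_erase s f h₀]
  rcases (s.erase i₀).eq_empty_or_nonempty with he | hne
  · rw [he]; simpa using hmain
  · have hrest' : padicNorm p (∑ i ∈ s.erase i₀, f i) < A :=
      padicNorm.sum_lt hne (fun i hi =>
        hrest i (mem_of_mem_erase hi) (ne_of_mem_erase hi))
    have hne2 : padicNorm p (f i₀) ≠ padicNorm p (∑ i ∈ s.erase i₀, f i) := by
      rw [hmain]; exact fun h => absurd h.symm (ne_of_lt hrest')
    rw [padicNorm.add_eq_max_of_ne hne2, hmain]
    exact max_eq_left (le_of_lt hrest')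
end


noncomputable def uu : PowerSeries ℚ := ell - 1

noncomputable def cc (p : ℕ) : ℚ := (-1)^(p-1) / p

noncomputable def ww (p : ℕ) : PowerSeries ℚ := uu - PowerSeries.C (cc p) * X^(p-1)

lemma coeff_ell (n : ℕ) : coeff n ell = (-1)^n / (n+1) := coeff_mk n _

lemma constantCoeff_ell : constantCoeff ell = 1 := by
  have := coeff_ell 0
  rw [coeff_zero_eq_constantCoeff] at this
  simpa using this

lemma coeff_uu (n : ℕ) : coeff n uu = if n = 0 then 0 else ((-1)^n / (n+1) : ℚ) := by
  rw [uu, map_sub, coeff_ell, coeff_one]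
  split <;> simp_all

lemma coeff_ww (p : ℕ) (hp2 : 2 ≤ p) (n : ℕ) :
    coeff n (ww p) = if n = 0 ∨ n = p - 1 then 0 else ((-1)^n / (n+1) : ℚ) := by
  rw [ww, map_sub, coeff_uu, coeff_C_mul, coeff_X_pow]
  by_cases h0 : n = 0
  · subst h0
    simp [show (0:ℕ) ≠ p - 1 by omega]
  · by_cases h1 : n = p - 1
    · subst h1
      have hcast : ((p-1 : ℕ):ℚ) + 1 = p := by
        push_cast [Nat.cast_sub (by omega : 1 ≤ p)]
        ring
      simp only [h0, if_false, if_true, if_neg h0, or_true, if_pos]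
      rw [hcast, cc]
      simp
    · simp [h0, h1]

lemma constantCoeff_uu : constantCoeff uu = 0 := by
  rw [← coeff_zero_eq_constantCoeff, coeff_uu]; simp

lemma coeff_pow_eq_zero_of_lt {φ : PowerSeries ℚ} (h0 : constantCoeff φ = 0)
    {N k : ℕ} (h : N < k) : coeff N (φ^k) = 0 := by
  rw [coeff_pow]
  apply sum_eq_zero
  intro l hl
  obtain ⟨hsum0, -⟩ := mem_finsuppAntidiag.1 hl
  have hsum : ∑ i ∈ range k, l i = N := hsum0
  have : ∃ i ∈ range k, l i = 0 := by
    by_contra hc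
    push_neg at hc
    have hk : k ≤ ∑ i ∈ range k, l i := by
      calc k = ∑ _i ∈ range k, 1 := by simp
      _ ≤ ∑ i ∈ range k, l i := sum_le_sum (fun i hi => by have := hc i hi; omega)
    omega
  obtain ⟨i, hi, hli⟩ := this
  apply prod_eq_zero hi
  rw [hli, coeff_zero_eq_constantCoeff]
  exact h0

lemma coeff_uu_pow (p : ℕ) (k N : ℕ) :
    coeff N (uu^k) = ∑ j ∈ range (k+1), (k.choose j : ℚ) * (cc p)^j *
      (if (p-1)*j ≤ N then coeff (N - (p-1)*j) ((ww p)^(k-j)) else 0) := by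
  have huw : uu = PowerSeries.C (cc p) * X^(p-1) + ww p := by rw [ww]; ring
  rw [huw, add_pow, map_sum]
  apply sum_congr rfl
  intro j hj
  have h1 : (PowerSeries.C (cc p) * X^(p-1))^j * (ww p)^(k-j) * ((k.choose j : ℕ) : ℚ⟦X⟧)
      = PowerSeries.C ((cc p)^j) *
        (X^((p-1)*j) * ((ww p)^(k-j) * PowerSeries.C ((k.choose j : ℕ) : ℚ))) := by
    rw [mul_pow, ← map_pow, ← pow_mul, ← map_natCast (PowerSeries.C : ℚ →+* ℚ⟦X⟧) (k.choose j)]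
    ring
  rw [h1, coeff_C_mul, coeff_X_pow_mul']
  split_ifs with h
  · rw [coeff_mul_C]
    ring
  · ring

lemma coeff_ell_pow_nat (T N : ℕ) :
    coeff N (ell ^ T) = ∑ k ∈ range (N+1), Ring.choose ((T:ℚ)) k * coeff N (uu^k) := by
  classical
  set f : ℕ → ℚ := fun k => Ring.choose ((T:ℚ)) k * coeff N (uu^k) with hf
  have hext : ∀ (A B : ℕ), A ≤ B → (∀ k, A < k → f k = 0) →
      ∑ k ∈ range (B+1), f k = ∑ k ∈ range (A+1), f k := by
    intro A B hAB hz
    refine (sum_subset (range_subset_range.2 (by omega)) ?_).symm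
    intro x hx hnx
    exact hz x (by simp only [mem_range] at hx hnx; omega)
  have h : ell = uu + 1 := by rw [uu]; ring
  have hlhs : coeff N (ell ^ T) = ∑ k ∈ range (T+1), f k := by
    rw [h, add_pow, map_sum]
    apply sum_congr rfl
    intro j hj
    rw [one_pow, mul_one, ← map_natCast (PowerSeries.C : ℚ →+* ℚ⟦X⟧) (T.choose j), coeff_mul_C, hf]
    simp only [Ring.choose_natCast]
    ring
  rw [hlhs]
  rcases Nat.le_total T N with hTN | hNT
  · exact (hext T N hTN (fun k hk => by
      simp only [hf, Ring.choose_natCast, Nat.choose_eq_zero_of_lt hk]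
      simp)).symm
  · exact hext N T hNT (fun k hk => by
      simp only [hf, coeff_pow_eq_zero_of_lt constantCoeff_uu hk]
      simp)

lemma coeff_ell_pow_nat' (T i M : ℕ) (hiM : i ≤ M) :
    coeff i (ell ^ T) = ∑ k ∈ range (M+1), Ring.choose ((T:ℚ)) k * coeff i (uu^k) := by
  rw [coeff_ell_pow_nat]
  refine sum_subset (range_subset_range.2 (by omega)) ?_
  intro x hx hnx
  simp only [mem_range] at hx hnx
  rw [coeff_pow_eq_zero_of_lt constantCoeff_uu (by omega), mul_zero]

lemma coeff_ellzpow (t : ℤ) (N : ℕ) :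
    coeff N (ellzpow t) = ∑ k ∈ range (N+1), Ring.choose ((t:ℚ)) k * coeff N (uu^k) := by
  classical
  rcases le_or_gt 0 t with hpos | hneg
  · rw [ellzpow, if_pos hpos]
    have : ((t.toNat : ℕ) : ℚ) = (t : ℚ) := by
      exact_mod_cast congrArg (fun z : ℤ => (z:ℚ)) (Int.toNat_of_nonneg hpos)
    rw [coeff_ell_pow_nat t.toNat N, this]
  · set s : ℕ := (-t).toNat with hs
    have hst : ((s:ℕ) : ℤ) = -t := Int.toNat_of_nonneg (by omega)
    have hstq : ((s:ℕ) : ℚ) = -(t:ℚ) := by exact_mod_cast congrArg (fun z : ℤ => (z:ℚ)) hst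
    rw [ellzpow, if_neg (by omega)]
    set G : PowerSeries ℚ :=
      PowerSeries.mk (fun n => ∑ k ∈ range (n+1), Ring.choose ((t:ℚ)) k * coeff n (uu^k))
      with hG
    have hGcoeff : ∀ (j M : ℕ), j ≤ M →
        coeff j G = ∑ k ∈ range (M+1), Ring.choose ((t:ℚ)) k * coeff j (uu^k) := by
      intro j M hjM
      rw [hG, coeff_mk]
      refine sum_subset (range_subset_range.2 (by omega)) ?_
      intro x hx hnx
      simp only [mem_range] at hx hnx
      rw [coeff_pow_eq_zero_of_lt constantCoeff_uu (by omega), mul_zero]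
    have hmain : ell ^ s * G = 1 := by
      ext n
      rw [coeff_mul]
      have hrw : ∀ x ∈ Finset.HasAntidiagonal.antidiagonal n,
          coeff x.1 (ell^s) * coeff x.2 G =
          ∑ k ∈ range (n+1), ∑ k' ∈ range (n+1),
            Ring.choose ((s:ℚ)) k * coeff x.1 (uu^k) *
            (Ring.choose ((t:ℚ)) k' * coeff x.2 (uu^k')) := by
        intro x hx
        have hx1 : x.1 ≤ n := Finset.HasAntidiagonal.antidiagonal.fst_le hx
        have hx2 : x.2 ≤ n := Finset.HasAntidiagonal.antidiagonal.snd_le hx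
        rw [coeff_ell_pow_nat' s x.1 n hx1, hGcoeff x.2 n hx2, sum_mul_sum]
      rw [sum_congr rfl hrw]
      rw [Finset.sum_comm]
      have hswap : ∀ k ∈ range (n+1),
          ∑ x ∈ Finset.HasAntidiagonal.antidiagonal n, ∑ k' ∈ range (n+1),
            Ring.choose ((s:ℚ)) k * coeff x.1 (uu^k) *
            (Ring.choose ((t:ℚ)) k' * coeff x.2 (uu^k')) =
          ∑ k' ∈ range (n+1),
            Ring.choose ((s:ℚ)) k * Ring.choose ((t:ℚ)) k' * coeff n (uu^(k+k')) := by
        intro k _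
        rw [Finset.sum_comm]
        apply sum_congr rfl
        intro k' _
        have : ∀ x ∈ Finset.HasAntidiagonal.antidiagonal n,
            Ring.choose ((s:ℚ)) k * coeff x.1 (uu^k) *
            (Ring.choose ((t:ℚ)) k' * coeff x.2 (uu^k')) =
            Ring.choose ((s:ℚ)) k * Ring.choose ((t:ℚ)) k' *
              (coeff x.1 (uu^k) * coeff x.2 (uu^k')) := by
          intro x _; ring
        rw [sum_congr rfl this, ← mul_sum, ← coeff_mul, ← pow_add]
      rw [sum_congr rfl hswap]
      -- now reindex double sum over (k,k') with k+k' ≤ n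
      have hFzero : ∀ kk : ℕ × ℕ, n < kk.1 + kk.2 →
          Ring.choose ((s:ℚ)) kk.1 * Ring.choose ((t:ℚ)) kk.2 * coeff n (uu^(kk.1+kk.2)) = 0 := by
        intro kk hkk
        rw [coeff_pow_eq_zero_of_lt constantCoeff_uu hkk, mul_zero]
      rw [← Finset.sum_product']
      have hsub : ∑ kk ∈ range (n+1) ×ˢ range (n+1),
            Ring.choose ((s:ℚ)) kk.1 * Ring.choose ((t:ℚ)) kk.2 * coeff n (uu^(kk.1+kk.2)) =
          ∑ kk ∈ (range (n+1) ×ˢ range (n+1)).filter (fun kk => kk.1 + kk.2 ≤ n),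
            Ring.choose ((s:ℚ)) kk.1 * Ring.choose ((t:ℚ)) kk.2 * coeff n (uu^(kk.1+kk.2)) := by
        refine (sum_subset (filter_subset _ _) ?_).symm
        intro x hx hnx
        simp only [mem_filter, mem_product, mem_range] at hx hnx
        exact hFzero x (by omega)
      rw [hsub]
      have hbi : (range (n+1) ×ˢ range (n+1)).filter (fun kk => kk.1 + kk.2 ≤ n) =
          (range (n+1)).biUnion (fun d => Finset.HasAntidiagonal.antidiagonal d) := by
        ext ⟨k, k'⟩
        simp only [mem_filter, mem_product, mem_range, mem_biUnion, Finset.HasAntidiagonal.mem_antidiagonal]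
        constructor
        · rintro ⟨⟨h1, h2⟩, h3⟩; exact ⟨k+k', by omega, rfl⟩
        · rintro ⟨d, hd, rfl⟩; omega
      rw [hbi, sum_biUnion ?hdisj]
      case hdisj =>
        intro d1 h1 d2 h2 hne
        simp only [Finset.disjoint_left]
        intro x hx1 hx2
        rw [Finset.HasAntidiagonal.mem_antidiagonal] at hx1 hx2
        exact hne (by omega)
      have hvdm : ∀ d ∈ range (n+1),
          ∑ kk ∈ Finset.HasAntidiagonal.antidiagonal d,
            Ring.choose ((s:ℚ)) kk.1 * Ring.choose ((t:ℚ)) kk.2 * coeff n (uu^(kk.1+kk.2)) =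
          (if d = 0 then 1 else 0) * coeff n (uu^d) := by
        intro d _
        have h1 : ∀ kk ∈ Finset.HasAntidiagonal.antidiagonal d,
            Ring.choose ((s:ℚ)) kk.1 * Ring.choose ((t:ℚ)) kk.2 * coeff n (uu^(kk.1+kk.2)) =
            Ring.choose ((s:ℚ)) kk.1 * Ring.choose ((t:ℚ)) kk.2 * coeff n (uu^d) := by
          intro kk hkk
          rw [Finset.HasAntidiagonal.mem_antidiagonal] at hkk
          rw [hkk]
        rw [sum_congr rfl h1, ← sum_mul]
        congr 1
        have := Ring.add_choose_eq (R := ℚ) (r := (s:ℚ)) (s := (t:ℚ)) d (Commute.all _ _)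
        rw [hstq] at this
        simp only [neg_add_cancel] at this
        rw [show ((s:ℕ):ℚ) = -(t:ℚ) from hstq, ← this]
        rcases Nat.eq_zero_or_pos d with rfl | hd
        · rw [Ring.choose_zero_right, if_pos rfl]
        · rw [ringChoose_zero_of_pos d hd, if_neg (by omega)]
      rw [sum_congr rfl hvdm]
      rw [Finset.sum_eq_single 0]
      · simp
      · intro b _ hb
        rw [if_neg hb, zero_mul]
      · intro h
        exact absurd (mem_range.2 (by omega)) h
    have hinv : constantCoeff ell ≠ 0 := by rw [constantCoeff_ell]; exact one_ne_zero
    have hG2 : ell⁻¹ ^ s = G := by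
      have h1 : (ell⁻¹)^s * (ell^s * G) = G := by
        rw [← mul_assoc, ← mul_pow, PowerSeries.inv_mul_cancel _ hinv, one_pow, one_mul]
      rw [hmain, mul_one] at h1
      exact h1
    rw [hG2, hG, coeff_mk]



section
variable {p : ℕ} [hp : Fact p.Prime]


lemma norm_neg_one_pow (k : ℕ) : padicNorm p ((-1 : ℚ)^k) = 1 := by
  rcases Nat.even_or_odd k with h | h
  · rw [h.neg_one_pow, padicNorm.one]
  · rw [h.neg_one_pow, padicNorm.neg, padicNorm.one]

lemma padicNorm_prod {ι : Type*} (s : Finset ι) (f : ι → ℚ) :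
    padicNorm p (∏ i ∈ s, f i) = ∏ i ∈ s, padicNorm p (f i) := by
  classical
  induction s using Finset.induction with
  | empty => simp [padicNorm.one]
  | @insert x s' hx ih => rw [prod_insert hx, prod_insert hx, padicNorm.mul, ih]

lemma hq1 : (1:ℚ) < p := by exact_mod_cast hp.out.one_lt
lemma hq0 : (0:ℚ) < p := by exact_mod_cast hp.out.pos

lemma padicNorm_mul_le_zpow {a b : ℚ} {e1 e2 : ℤ}
    (h1 : padicNorm p a ≤ (p:ℚ)^e1) (h2 : padicNorm p b ≤ (p:ℚ)^e2) :
    padicNorm p (a*b) ≤ (p:ℚ)^(e1+e2) := by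
  rw [padicNorm.mul, zpow_add₀ (ne_of_gt (hq0 (p:=p)))]
  exact mul_le_mul h1 h2 (padicNorm.nonneg b) (le_of_lt (zpow_pos (hq0 (p:=p)) e1))

-- Step 1
lemma ww_pow_norm_le (B T : ℕ) (hB : 1 ≤ B) :
    padicNorm p (coeff ((p-1)*T) ((ww p)^B)) ≤ (p:ℚ)^((T:ℤ) - padicValNat p B - 1) := by
  have hp2 : 2 ≤ p := hp.out.two_le
  rw [coeff_pow]
  apply padicNorm_sum_le'' (le_of_lt (zpow_pos (hq0 (p:=p)) _))
  intro l hl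
  obtain ⟨hsum0, -⟩ := mem_finsuppAntidiag.1 hl
  have hsum : ∑ i ∈ range B, l i = (p-1)*T := hsum0
  by_cases hz : ∃ i ∈ range B, coeff (l i) (ww p) = 0
  · obtain ⟨i, hi, hzi⟩ := hz
    rw [prod_eq_zero hi hzi, padicNorm.zero]
    exact le_of_lt (zpow_pos (hq0 (p:=p)) _)
  · push_neg at hz
    have hli : ∀ i ∈ range B, l i ≠ 0 ∧ l i ≠ p - 1 := by
      intro i hi
      have := hz i hi
      rw [coeff_ww p hp2] at this
      by_contra hc
      rw [not_and_or, not_ne_iff, not_ne_iff] at hc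
      exact this (by rw [if_pos (by tauto)])
    have hnormi : ∀ i ∈ range B,
        padicNorm p (coeff (l i) (ww p)) = (p:ℚ)^(padicValNat p (l i + 1)) := by
      intro i hi
      rw [coeff_ww p hp2, if_neg (by push_neg; exact hli i hi), padicNorm.div,
        norm_neg_one_pow]
      have : ((l i : ℚ) + 1) = ((l i + 1 : ℕ) : ℚ) := by push_cast; ring
      rw [this, padicNorm_natCast (p := p) _ (by omega), one_div, ← zpow_neg, neg_neg,
        zpow_natCast]
    rw [padicNorm_prod, prod_congr rfl hnormi, prod_pow_eq_pow_sum]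
    set S := ∑ i ∈ range B, padicValNat p (l i + 1) with hS
    -- (p-1)*S + B ≤ (p-1)*T  and (p-1)*vB + 1 ≤ B
    have hSB : (p-1)*S + B ≤ (p-1)*T := by
      have h1 : ∀ i ∈ range B, (p-1) * padicValNat p (l i + 1) + 1 ≤ l i := by
        intro i hi
        have h2 := val_ineq_q (p := p) (l i + 1) (by have := (hli i hi).1; omega)
          (by have := (hli i hi).2; omega)
        omega
      calc (p-1)*S + B = ∑ i ∈ range B, ((p-1) * padicValNat p (l i + 1) + 1) := by
            rw [hS, mul_sum, sum_add_distrib]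
            simp
        _ ≤ ∑ i ∈ range B, l i := sum_le_sum h1
        _ = (p-1)*T := hsum
    have hvB := val_ineq_B (p := p) B hB
    have hfin : S + padicValNat p B + 1 ≤ T := by
      have hP1 : 1 ≤ p - 1 := by omega
      nlinarith [hSB, hvB]
    have hfin' : (S:ℤ) + (padicValNat p B : ℤ) + 1 ≤ (T:ℤ) := by exact_mod_cast hfin
    have : ((S:ℕ):ℤ) ≤ (T:ℤ) - padicValNat p B - 1 := by omega
    calc ((p:ℚ))^(S:ℕ) = (p:ℚ)^((S:ℕ):ℤ) := by rw [zpow_natCast]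
      _ ≤ (p:ℚ)^((T:ℤ) - padicValNat p B - 1) := zpow_le_zpow_right₀ (le_of_lt (hq1 (p:=p))) this

-- Step 2
lemma choose_norm_le (k B : ℕ) (hB : 1 ≤ B) (hBk : B ≤ k) :
    padicNorm p ((k.choose B : ℚ)) ≤ (p:ℚ)^((padicValNat p B : ℤ) - padicValNat p k) := by
  have hk : 1 ≤ k := le_trans hB hBk
  have hid : k * (k-1).choose (B-1) = k.choose B * B := by
    have := Nat.add_one_mul_choose_eq (k-1) (B-1)
    have h1 : k - 1 + 1 = k := by omega
    have h2 : B - 1 + 1 = B := by omega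
    simp only [Nat.succ_eq_add_one, h1, h2] at this
    exact this
  have hCne : k.choose B ≠ 0 := Nat.choose_pos hBk |>.ne'
  have hCne2 : (k-1).choose (B-1) ≠ 0 := (Nat.choose_pos (by omega)).ne'
  have hval : padicValNat p k + padicValNat p ((k-1).choose (B-1))
      = padicValNat p (k.choose B) + padicValNat p B := by
    rw [← padicValNat.mul (by omega) hCne2, ← padicValNat.mul hCne (by omega), hid]
  have hineq : (padicValNat p k : ℤ) ≤ padicValNat p (k.choose B) + padicValNat p B := by
    have : (0:ℤ) ≤ padicValNat p ((k-1).choose (B-1)) := Int.natCast_nonneg _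
    omega
  rw [padicNorm_natCast (p := p) _ hCne]
  apply zpow_le_zpow_right₀ (le_of_lt (hq1 (p:=p)))
  omega
end

section estimates
variable {p : ℕ} [hp : Fact p.Prime]


lemma padicNorm_pow' (x : ℚ) (n : ℕ) : padicNorm p (x^n) = (padicNorm p x)^n := by
  induction n with
  | zero => simp [padicNorm.one]
  | succ n ih => rw [pow_succ, pow_succ, padicNorm.mul, ih]

lemma norm_cc : padicNorm p (cc p) = (p:ℚ)^(1:ℤ) := by
  rw [cc, padicNorm.div, norm_neg_one_pow, padicNorm_natCast (p := p) p hp.out.ne_zero]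
  rw [padicValNat.self hp.out.one_lt]
  rw [one_div, ← zpow_neg]
  norm_num

lemma norm_cc_pow (j : ℕ) : padicNorm p ((cc p)^j) = (p:ℚ)^((j:ℕ):ℤ) := by
  rw [padicNorm_pow', norm_cc, ← zpow_natCast ((p:ℚ)^(1:ℤ)) j, ← zpow_mul]
  norm_num

-- inner term bound (no chi): for j < k, with N = (p-1)*m
lemma inner_term_bound (m : ℕ) (k j : ℕ) (hjk : j < k) :
    padicNorm p ((k.choose j : ℚ) * (cc p)^j *
      (if (p-1)*j ≤ (p-1)*m then coeff ((p-1)*m - (p-1)*j) ((ww p)^(k-j)) else 0))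
      ≤ (p:ℚ)^((m:ℤ) - padicValNat p k - 1) := by
  have hp2 : 2 ≤ p := hp.out.two_le
  set B := k - j with hB
  have hB1 : 1 ≤ B := by omega
  by_cases hjm : j ≤ m
  · rw [if_pos (Nat.mul_le_mul_left _ hjm)]
    have hD : (p-1)*m - (p-1)*j = (p-1)*(m-j) := by
      rw [Nat.mul_sub]
    rw [hD]
    have h1 : (k.choose j : ℚ) = (k.choose B : ℚ) := by
      rw [hB, Nat.choose_symm (le_of_lt hjk)]
    rw [h1]
    have hc := choose_norm_le (p := p) k B hB1 (by omega)
    have hcc := norm_cc_pow (p := p) j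
    have hw := ww_pow_norm_le (p := p) B (m - j) hB1
    have hassoc : (k.choose B : ℚ) * (cc p)^j * coeff ((p-1)*(m-j)) ((ww p)^B)
        = (k.choose B : ℚ) * ((cc p)^j * coeff ((p-1)*(m-j)) ((ww p)^B)) := by ring
    rw [hassoc]
    have := padicNorm_mul_le_zpow (p := p) hc
      (padicNorm_mul_le_zpow (p := p) (le_of_eq hcc) hw)
    apply le_trans this
    apply le_of_eq
    congr 1
    have hmj : ((m-j:ℕ):ℤ) = (m:ℤ) - j := by
      rw [Nat.cast_sub hjm]
    omega
  · rw [if_neg (by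
      intro hc
      have := Nat.le_of_mul_le_mul_left hc (by omega : 0 < p - 1)
      omega)]
    rw [mul_zero, padicNorm.zero]
    exact le_of_lt (zpow_pos (hq0 (p:=p)) _)

-- Step 4: whole k-term bound for k ≠ m
lemma term_norm_le (t : ℤ) (ht : t ≠ 0) (m : ℕ) (hm : 0 < m) (k : ℕ) (hkm : k ≠ m) :
    padicNorm p (Ring.choose (t:ℚ) k * coeff ((p-1)*m) (uu^k))
      ≤ (p:ℚ)^((m:ℤ) - padicValInt p t - 1) := by
  have hp2 : 2 ≤ p := hp.out.two_le
  rcases Nat.eq_zero_or_pos k with rfl | hk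
  · have hN : (p-1)*m ≠ 0 := by
      have := Nat.mul_pos (by omega : 0 < p - 1) hm
      omega
    rw [pow_zero, coeff_one, if_neg hN, mul_zero, padicNorm.zero]
    exact le_of_lt (zpow_pos (hq0 (p:=p)) _)
  · rw [coeff_uu_pow p k ((p-1)*m), mul_sum]
    apply padicNorm_sum_le'' (le_of_lt (zpow_pos (hq0 (p:=p)) _))
    intro j hj
    have hjk : j ≤ k := by simp only [mem_range] at hj; omega
    rcases eq_or_lt_of_le hjk with heq | hjlt
    · -- j = k : B = 0 term vanishes since k ≠ m
      have hz : ((k.choose j : ℚ) * (cc p)^j *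
          (if (p-1)*j ≤ (p-1)*m then coeff ((p-1)*m - (p-1)*j) ((ww p)^(k-j)) else 0)) = 0 := by
        rw [heq]
        by_cases hkm' : (p-1)*k ≤ (p-1)*m
        · rw [if_pos hkm']
          have hkm2 : k ≤ m := Nat.le_of_mul_le_mul_left hkm' (by omega)
          have hlt : k < m := by omega
          have hne : (p-1)*m - (p-1)*k ≠ 0 := by
            have h2 : (p-1)*k < (p-1)*m := by
              have := Nat.mul_le_mul_left (p-1) (show k+1 ≤ m by omega)
              have h3 : (p-1)*(k+1) = (p-1)*k + (p-1) := by ring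
              omega
            omega
          rw [Nat.sub_self, pow_zero, coeff_one, if_neg hne, mul_zero]
        · rw [if_neg hkm', mul_zero]
      rw [hz, mul_zero, padicNorm.zero]
      exact le_of_lt (zpow_pos (hq0 (p:=p)) _)
    · have h1 := chi_norm_le (p := p) t ht k hk
      have h2 := inner_term_bound (p := p) m k j hjlt
      have := padicNorm_mul_le_zpow (p := p) h1 h2
      apply le_trans this
      apply le_of_eq
      congr 1
      omega

end estimates

section final
variable {p : ℕ} [hp : Fact p.Prime]


-- Step 5
lemma main_coeff_norm (m : ℕ) (hm : 0 < m) :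
    padicNorm p (coeff ((p-1)*m) (uu^m)) = (p:ℚ)^((m:ℕ):ℤ) := by
  have hp2 : 2 ≤ p := hp.out.two_le
  rw [coeff_uu_pow p m ((p-1)*m)]
  apply padicNorm_sum_eq (i₀ := m) (mem_range.2 (by omega)) (zpow_pos (hq0 (p:=p)) _)
  · -- main term j = m
    rw [Nat.choose_self, Nat.sub_self, if_pos (le_refl _), Nat.sub_self, pow_zero, coeff_one,
      if_pos rfl]
    rw [Nat.cast_one, one_mul, mul_one]
    exact norm_cc_pow m
  · intro j hj hjm
    have hjlt : j < m := by simp only [mem_range] at hj; omega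
    have h2 := inner_term_bound (p := p) m m j hjlt
    apply lt_of_le_of_lt h2
    apply zpow_lt_zpow_right₀ (hq1 (p:=p))
    have : (0:ℤ) ≤ padicValNat p m := Int.natCast_nonneg _
    omega

theorem main_divisibility' (t : ℤ) (ht : t ≠ 0)
    (m : ℕ) (hm : 0 < m) (hmp : m ≤ p ^ padicValInt p t) :
    padicValRat p (PowerSeries.coeff ((p - 1) * m) (ellzpow t)) =
      (padicValInt p t : ℤ) - padicValNat p m - m := by
  have hp2 : 2 ≤ p := hp.out.two_le
  set a := padicValInt p t with ha
  set vm := padicValNat p m with hvm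
  have hnorm : padicNorm p (coeff ((p-1)*m) (ellzpow t))
      = (p:ℚ)^((m:ℤ) + vm - a) := by
    rw [coeff_ellzpow t ((p-1)*m)]
    apply padicNorm_sum_eq (i₀ := m) (mem_range.2 (by
      have := Nat.le_mul_of_pos_left m (show 0 < p-1 by omega)
      omega)) (zpow_pos (hq0 (p:=p)) _)
    · -- main term k = m
      obtain ⟨hne, hval⟩ := chi_val_eq (p := p) t ht m hm hmp
      rw [padicNorm.mul, main_coeff_norm m hm, padicNorm.eq_zpow_of_nonzero hne, hval,
        ← zpow_add₀ (ne_of_gt (hq0 (p:=p)))]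
      congr 1
      omega
    · intro k hk hkm
      apply lt_of_le_of_lt (term_norm_le t ht m hm k hkm)
      apply zpow_lt_zpow_right₀ (hq1 (p:=p))
      have : (0:ℤ) ≤ (vm:ℤ) := Int.natCast_nonneg _
      omega
  have hne0 : coeff ((p-1)*m) (ellzpow t) ≠ 0 := by
    intro hc
    rw [hc, padicNorm.zero] at hnorm
    exact absurd hnorm.symm (ne_of_gt (zpow_pos (hq0 (p:=p)) _))
  rw [padicNorm.eq_zpow_of_nonzero hne0] at hnorm
  have hinj : -(padicValRat p (coeff ((p-1)*m) (ellzpow t))) = (m:ℤ) + vm - a := by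
    by_contra hc
    rcases lt_trichotomy (-(padicValRat p (coeff ((p-1)*m) (ellzpow t)))) ((m:ℤ) + vm - a)
      with h | h | h
    · exact absurd hnorm (ne_of_lt (zpow_lt_zpow_right₀ (hq1 (p:=p)) h))
    · exact hc h
    · exact absurd hnorm.symm (ne_of_lt (zpow_lt_zpow_right₀ (hq1 (p:=p)) h))
  omega

end final


theorem main_divisibility {p : ℕ} (hp : p.Prime) (t : ℤ) (ht : t ≠ 0)
    (m : ℕ) (hm : 0 < m) (hmp : m ≤ p ^ padicValInt p t) :
    padicValRat p (PowerSeries.coeff ((p - 1) * m) (ellzpow t)) =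
      (padicValInt p t : ℤ) - padicValNat p m - m := by
  haveI : Fact p.Prime := ⟨hp⟩
  exact main_divisibility' t ht m hm hmp
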